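/- Let n ≥ 2 and let A be a symmetric n×n real matrix with the property that ⟨Av,v⟩ + ⟨Aw,w⟩ > 0 for every pair of orthonormal vectors v,w ∈ ℝⁿ. Then tr(A φ φᵀ) > 0 for every nonzero antisymmetric n×n real matrix φ. -/

import Mathlib

open Matrix


/-- Key sum lemma. -/
lemma aux_sum_pos (n : ℕ) (μ : Fin n → ℝ) (ψ : Matrix (Fin n) (Fin n) ℝ)
    (hanti : ψᵀ = -ψ) (hψ0 : ψ ≠ 0)
    (hμ : ∀ i j, i ≠ j → 0 < μ i + μ j) :
    0 < ∑ i, ∑ j, μ i * (ψ i j)^2 := by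
  have hsq : ∀ i j, (ψ j i)^2 = (ψ i j)^2 := by
    intro i j
    have : ψ j i = -ψ i j := by
      have := congrFun (congrFun hanti i) j
      simpa [transpose_apply] using this
    rw [this]; ring
  have hdiag : ∀ i, ψ i i = 0 := by
    intro i
    have := congrFun (congrFun hanti i) i
    simp only [transpose_apply, Matrix.neg_apply] at this
    linarith
  have key : (∑ i, ∑ j, (μ i + μ j) * (ψ i j)^2) = 2 * ∑ i, ∑ j, μ i * (ψ i j)^2 := by
    have h1 : ∀ i j : Fin n, (μ i + μ j) * (ψ i j)^2 = μ i * (ψ i j)^2 + μ j * (ψ i j)^2 :=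
      fun i j => by ring
    simp_rw [h1, Finset.sum_add_distrib]
    have h2 : (∑ i, ∑ j, μ j * (ψ i j)^2) = ∑ i, ∑ j, μ i * (ψ i j)^2 := by
      rw [Finset.sum_comm]
      exact Finset.sum_congr rfl fun i _ => Finset.sum_congr rfl fun j _ =>
        (by rw [hsq i j] : μ i * (ψ j i)^2 = μ i * (ψ i j)^2)
    rw [h2]; ring
  -- nonneg termwise
  have hterm : ∀ i j, 0 ≤ (μ i + μ j) * (ψ i j)^2 := by
    intro i j
    rcases eq_or_ne i j with rfl | h
    · simp [hdiag i]
    · exact mul_nonneg (hμ i j h).le (sq_nonneg _)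
  obtain ⟨i, j, hij⟩ : ∃ i j, ψ i j ≠ 0 := by
    by_contra h
    push_neg at h
    exact hψ0 (by ext i j; simpa using h i j)
  have hij' : i ≠ j := fun h => hij (h ▸ hdiag i)
  have hpos : 0 < (μ i + μ j) * (ψ i j)^2 :=
    mul_pos (hμ i j hij') (by positivity)
  have : 0 < ∑ i, ∑ j, (μ i + μ j) * (ψ i j)^2 := by
    calc 0 < (μ i + μ j) * (ψ i j)^2 := hpos
    _ ≤ ∑ j', (μ i + μ j') * (ψ i j')^2 :=
        Finset.single_le_sum (fun k _ => hterm i k) (Finset.mem_univ j)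
    _ ≤ ∑ i', ∑ j', (μ i' + μ j') * (ψ i' j')^2 :=
        Finset.single_le_sum (fun k _ => Finset.sum_nonneg fun l _ => hterm k l) (Finset.mem_univ i)
  linarith [key]

/-- If a symmetric matrix `A` is two-positive, i.e.
`⟨Av,v⟩ + ⟨Aw,w⟩ > 0` for every orthonormal pair `v, w`, then
`tr(A φ φᵀ) > 0` for every nonzero antisymmetric matrix `φ`. -/
theorem two_positive_implies_positive_on_antisymmetric
    (n : ℕ) (hn : 2 ≤ n) (A : Matrix (Fin n) (Fin n) ℝ) (hA : A.IsSymm)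
    (hpos : ∀ v w : Fin n → ℝ, v ⬝ᵥ v = 1 → w ⬝ᵥ w = 1 → v ⬝ᵥ w = 0 →
      0 < (A.mulVec v) ⬝ᵥ v + (A.mulVec w) ⬝ᵥ w)
    (φ : Matrix (Fin n) (Fin n) ℝ) (hφ : φᵀ = -φ) (hφ0 : φ ≠ 0) :
    0 < Matrix.trace (A * φ * φᵀ) := by
  have hH : A.IsHermitian := by
    rw [Matrix.IsHermitian, conjTranspose_eq_transpose_of_trivial]
    exact hA
  set U : Matrix (Fin n) (Fin n) ℝ := (hH.eigenvectorUnitary : Matrix (Fin n) (Fin n) ℝ) with hU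
  set μ := hH.eigenvalues with hμdef
  have hUmem : U ∈ Matrix.unitaryGroup (Fin n) ℝ := hH.eigenvectorUnitary.2
  have hUtU : Uᵀ * U = 1 := by
    have := (Matrix.mem_unitaryGroup_iff').mp hUmem
    simpa [star_eq_conjTranspose, conjTranspose_eq_transpose_of_trivial] using this
  have hUUt : U * Uᵀ = 1 := by
    have := (Matrix.mem_unitaryGroup_iff).mp hUmem
    simpa [star_eq_conjTranspose, conjTranspose_eq_transpose_of_trivial] using this
  have hspec : A = U * diagonal μ * Uᵀ := by
    have := hH.spectral_theorem
    simpa [star_eq_conjTranspose, conjTranspose_eq_transpose_of_trivial, Function.comp] using this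
  set ψ : Matrix (Fin n) (Fin n) ℝ := Uᵀ * φ * U with hψdef
  have hψanti : ψᵀ = -ψ := by
    simp [hψdef, transpose_mul, hφ, Matrix.mul_assoc, Matrix.neg_mul, Matrix.mul_neg]
  have hψ0 : ψ ≠ 0 := by
    intro h
    apply hφ0
    have : U * ψ * Uᵀ = φ := by
      rw [hψdef]
      calc U * (Uᵀ * φ * U) * Uᵀ = (U * Uᵀ) * φ * (U * Uᵀ) := by simp only [Matrix.mul_assoc]
      _ = φ := by rw [hUUt]; simp
    rw [← this, h]; simp
  -- eigenvalue pair positivity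
  have hcol : ∀ j, A *ᵥ (fun i => U i j) = μ j • (fun i => U i j) := by
    intro j
    have := hH.mulVec_eigenvectorBasis j
    have hUj : (fun i => U i j) = ⇑(hH.eigenvectorBasis j) := by
      funext i; exact hH.eigenvectorUnitary_apply i j
    rw [hUj]; exact this
  have hdot : ∀ i j, (fun k => U k i) ⬝ᵥ (fun k => U k j) = (1 : Matrix (Fin n) (Fin n) ℝ) i j := by
    intro i j
    rw [← hUtU]
    simp [Matrix.mul_apply, dotProduct]
  have hμpos : ∀ i j, i ≠ j → 0 < μ i + μ j := by
    intro i j hij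
    have h1 := hdot i i
    have h2 := hdot j j
    have h3 := hdot i j
    rw [Matrix.one_apply_eq] at h1 h2
    rw [Matrix.one_apply_ne hij] at h3
    have := hpos (fun k => U k i) (fun k => U k j) h1 h2 h3
    rwa [hcol i, hcol j, smul_dotProduct, smul_dotProduct, h1, h2, smul_eq_mul, smul_eq_mul,
      mul_one, mul_one] at this
  -- trace computation
  have htr : Matrix.trace (A * φ * φᵀ) = ∑ i, ∑ j, μ i * (ψ i j)^2 := by
    have hφψ : φ = U * ψ * Uᵀ := by
      rw [hψdef]
      calc φ = (U * Uᵀ) * φ * (U * Uᵀ) := by rw [hUUt]; simp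
      _ = U * (Uᵀ * φ * U) * Uᵀ := by simp [Matrix.mul_assoc]
    have : A * φ * φᵀ = U * (diagonal μ * ψ * ψᵀ) * Uᵀ := by
      rw [hspec]
      conv_lhs => rw [hφψ]
      rw [transpose_mul, transpose_mul, transpose_transpose]
      simp only [Matrix.mul_assoc]
      rw [show Uᵀ * (U * (ψ * (Uᵀ * (U * (ψᵀ * Uᵀ))))) = (Uᵀ * U) * (ψ * ((Uᵀ * U) * (ψᵀ * Uᵀ))) by
        simp [Matrix.mul_assoc]]
      rw [hUtU]
      simp [Matrix.mul_assoc]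
    rw [this, Matrix.trace_mul_cycle, ← Matrix.mul_assoc, hUtU, Matrix.one_mul]
    simp [Matrix.trace, Matrix.diag, Matrix.mul_apply, Matrix.diagonal_apply, Finset.mul_sum,
      sq, mul_assoc]
  rw [htr]
  exact aux_sum_pos n μ ψ hψanti hψ0 hμpos
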